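/- The map η: S(ℚ) → C(ℚ)^× sending the characteristic function χ_{a+dℤ} (0 ≤ a < d, a,d ∈ ℚ, d > 0) to the function z ↦ 1 - e^{2πi(z-a)/d} is a well-defined group homomorphism from the additive group of locally constant ℤ-valued functions with bounded support on ℚ to the multiplicative group of nowhere-zero meromorphic functions; in particular it respects the refinement relation χ_{a+dℤ} = Σ_{b=0}^{m-1} χ_{a+db+dmℤ}. -/

import Mathlib

open Complex Finset

/-- `e(z) = exp(2πiz)`. -/
noncomputable def e (z : ℂ) : ℂ := Complex.exp (2 * Real.pi * I * z)

open Classical in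
/-- The characteristic function of the arithmetic progression `a + dℤ` in `ℚ`. -/
noncomputable def ind (a d : ℚ) : ℚ → ℤ :=
  fun x => if ∃ k : ℤ, x = a + d * k then 1 else 0

/-- `S(ℚ)`: the additive group of locally constant `ℤ`-valued functions with bounded
support on `ℚ`, i.e. the subgroup of `ℚ → ℤ` generated by the characteristic
functions `χ_{a+dℤ}` with `0 ≤ a < d`. -/
def SQ : AddSubgroup (ℚ → ℤ) :=
  AddSubgroup.closure {f | ∃ a d : ℚ, 0 ≤ a ∧ a < d ∧ f = ind a d}

/-- The complement of `ℚ` in `ℂ`: the functions `z ↦ 1 - e((z-a)/d)` are nowhere zero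
there, so they are units of the ring of functions on this set. -/
def Dom : Type := {z : ℂ // ∀ q : ℚ, (q : ℂ) ≠ z}

lemma e_add (x y : ℂ) : e (x + y) = e x * e y := by
  simp [e, mul_add, Complex.exp_add]

lemma e_ne_zero (x : ℂ) : e x ≠ 0 := Complex.exp_ne_zero _

lemma e_nat_mul (n : ℕ) (x : ℂ) : e ((n : ℂ) * x) = e x ^ n := by
  rw [e, e, ← Complex.exp_nat_mul]; ring_nf

lemma e_eq_one_iff {z : ℂ} : e z = 1 ↔ ∃ n : ℤ, z = (n : ℂ) := by
  rw [e, Complex.exp_eq_one_iff]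
  have h2 : (2 * (Real.pi : ℂ) * I) ≠ 0 := by
    simp [Real.pi_ne_zero, I_ne_zero]
  constructor
  · rintro ⟨n, hn⟩
    refine ⟨n, mul_left_cancel₀ h2 ?_⟩
    rw [hn]; ring
  · rintro ⟨n, rfl⟩
    exact ⟨n, by ring⟩

lemma prod_one_sub_mul {m : ℕ} (hm : 0 < m) {ζ : ℂ} (h : IsPrimitiveRoot ζ m) (y : ℂ) :
    ∏ b ∈ Finset.range m, (1 - y * ζ ^ b) = 1 - y ^ m := by
  rcases eq_or_ne y 0 with rfl | hy
  · simp [hm.ne']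
  · have hpoly := Polynomial.X_pow_sub_one_eq_prod hm h
    have hev := congrArg (Polynomial.eval y⁻¹) hpoly
    simp only [Polynomial.eval_prod, Polynomial.eval_sub, Polynomial.eval_pow,
      Polynomial.eval_X, Polynomial.eval_one, Polynomial.eval_C] at hev
    have himg : (Finset.range m).image (ζ ^ ·) = Polynomial.nthRootsFinset m (1 : ℂ) := by
      apply Finset.eq_of_subset_of_card_le
      · intro x hx
        simp only [Finset.mem_image, Finset.mem_range] at hx
        obtain ⟨b, _, rfl⟩ := hx
        rw [Polynomial.mem_nthRootsFinset hm, ← pow_mul, mul_comm, pow_mul, h.pow_eq_one, one_pow]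
      · rw [h.card_nthRootsFinset, Finset.card_image_of_injOn h.injOn_pow, Finset.card_range]
    rw [← himg, Finset.prod_image (fun x hx y hy hxy => h.injOn_pow hx hy hxy)] at hev
    calc ∏ b ∈ Finset.range m, (1 - y * ζ ^ b)
        = ∏ b ∈ Finset.range m, (y * (y⁻¹ - ζ ^ b)) := by
          refine Finset.prod_congr rfl fun b _ => ?_
          field_simp
      _ = y ^ m * ∏ b ∈ Finset.range m, (y⁻¹ - ζ ^ b) := by
          rw [Finset.prod_mul_distrib, Finset.prod_const, Finset.card_range]
      _ = y ^ m * ((y⁻¹) ^ m - 1) := by rw [← hev]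
      _ = 1 - y ^ m := by
          rw [mul_sub, ← mul_pow, mul_inv_cancel₀ hy, one_pow, mul_one]

lemma prod_refine (z α c : ℂ) (hc : c ≠ 0) (m : ℕ) (hm : 1 ≤ m) :
    ∏ b ∈ Finset.range m, (1 - e ((z - α - c * (b : ℂ)) / (c * (m : ℂ)))) = 1 - e ((z - α) / c) := by
  have hm0 : (m : ℂ) ≠ 0 := Nat.cast_ne_zero.mpr (by omega)
  have hz : IsPrimitiveRoot (e (-(1 / (m : ℂ)))) m := by
    have h1 := (Complex.isPrimitiveRoot_exp m (by omega)).inv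
    have h2 : e (-(1 / (m : ℂ))) = (Complex.exp (2 * Real.pi * I / m))⁻¹ := by
      rw [e, ← Complex.exp_neg]; ring_nf
    rwa [h2]
  have key := prod_one_sub_mul (by omega) hz (e ((z - α) / (c * m)))
  have hfac : ∀ b ∈ Finset.range m,
      (1 - e ((z - α - c * (b : ℂ)) / (c * (m : ℂ))))
        = 1 - e ((z - α) / (c * m)) * e (-(1 / (m : ℂ))) ^ b := by
    intro b _
    rw [← e_nat_mul, ← e_add]
    congr 2
    field_simp
    ring
  rw [Finset.prod_congr rfl hfac, key, ← e_nat_mul]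
  congr 2
  field_simp

lemma base_ne_zero (c N : ℚ) (hN : N ≠ 0) (z : Dom) :
    (1 : ℂ) - e ((z.1 - (c : ℂ)) / (N : ℂ)) ≠ 0 := by
  intro h
  have hNC : ((N : ℚ) : ℂ) ≠ 0 := by exact_mod_cast hN
  have h1 : e ((z.1 - (c : ℂ)) / (N : ℂ)) = 1 := by linear_combination -h
  obtain ⟨n, hn⟩ := e_eq_one_iff.mp h1
  rw [div_eq_iff hNC] at hn
  apply z.2 (c + N * n)
  push_cast
  linear_combination -hn

noncomputable def baseU (c N : ℚ) (hN : N ≠ 0) : (Dom → ℂ)ˣ where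
  val := fun z => 1 - e ((z.1 - (c : ℂ)) / (N : ℂ))
  inv := fun z => (1 - e ((z.1 - (c : ℂ)) / (N : ℂ)))⁻¹
  val_inv := funext fun z => mul_inv_cancel₀ (base_ne_zero c N hN z)
  inv_val := funext fun z => inv_mul_cancel₀ (base_ne_zero c N hN z)

lemma natQ_ne (N : ℕ+) : ((N : ℕ) : ℚ) ≠ 0 := Nat.cast_ne_zero.mpr N.pos.ne'

noncomputable def F (N Q : ℕ+) (f : ℚ → ℤ) : (Dom → ℂ)ˣ :=
  ∏ j ∈ Finset.range ((N : ℕ) * (Q : ℕ)),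
    (baseU ((j : ℚ) / ((Q : ℕ) : ℚ)) ((N : ℕ) : ℚ) (natQ_ne N)) ^ f ((j : ℚ) / ((Q : ℕ) : ℚ))

lemma F_add (N Q : ℕ+) (f g : ℚ → ℤ) : F N Q (f + g) = F N Q f * F N Q g := by
  simp only [F, Pi.add_apply, zpow_add, Finset.prod_mul_distrib]

lemma F_neg (N Q : ℕ+) (f : ℚ → ℤ) : F N Q (-f) = (F N Q f)⁻¹ := by
  simp only [F, Pi.neg_apply, zpow_neg, Finset.prod_inv_distrib]

lemma F_zero (N Q : ℕ+) : F N Q 0 = 1 := by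
  simp only [F, Pi.zero_apply, zpow_zero, Finset.prod_const_one]

lemma F_ind (a d : ℚ) (ha : 0 ≤ a) (had : a < d) (N Q : ℕ+)
    (m : ℕ) (hm : 1 ≤ m) (hNm : (((N : ℕ) : ℚ)) = d * m)
    (A : ℕ) (hA : (A : ℚ) = ((Q : ℕ) : ℚ) * a)
    (D : ℕ) (hD : (D : ℚ) = ((Q : ℕ) : ℚ) * d) :
    F N Q (ind a d) = baseU a d (ha.trans_lt had).ne' := by
  classical
  have hd0 : 0 < d := ha.trans_lt had
  have hQ0 : (0 : ℚ) < ((Q : ℕ) : ℚ) := by exact_mod_cast Q.pos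
  have hAD : A < D := by
    have : (A : ℚ) < (D : ℚ) := by rw [hA, hD]; exact (mul_lt_mul_iff_right₀ hQ0).mpr had
    exact_mod_cast this
  have hD0 : 0 < D := lt_of_le_of_lt (Nat.zero_le A) hAD
  have hNQ : (N : ℕ) * (Q : ℕ) = D * m := by
    have : (((N : ℕ) * (Q : ℕ) : ℕ) : ℚ) = ((D * m : ℕ) : ℚ) := by
      push_cast; rw [hNm, hD]; ring
    exact_mod_cast this
  -- step 1: rewrite zpow as ite
  have hsplit : ∀ j ∈ Finset.range ((N : ℕ) * (Q : ℕ)),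
      (baseU ((j : ℚ) / ((Q : ℕ) : ℚ)) ((N : ℕ) : ℚ) (natQ_ne N))
          ^ ind a d ((j : ℚ) / ((Q : ℕ) : ℚ))
        = if ∃ k : ℤ, (j : ℚ) / ((Q : ℕ) : ℚ) = a + d * k then
            baseU ((j : ℚ) / ((Q : ℕ) : ℚ)) ((N : ℕ) : ℚ) (natQ_ne N) else 1 := by
    intro j _
    by_cases h : ∃ k : ℤ, (j : ℚ) / ((Q : ℕ) : ℚ) = a + d * k
    · simp [ind, h]
    · simp [ind, h]
  have hfilt : (Finset.range ((N : ℕ) * (Q : ℕ))).filter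
        (fun j : ℕ => ∃ k : ℤ, ((j : ℕ) : ℚ) / ((Q : ℕ) : ℚ) = a + d * k)
      = (Finset.range m).image (fun b : ℕ => A + D * b) := by
    ext j
    simp only [Finset.mem_filter, Finset.mem_range, Finset.mem_image]
    constructor
    · rintro ⟨hj, k, hk⟩
      rw [div_eq_iff hQ0.ne'] at hk
      have hjq : (j : ℚ) = (A : ℚ) + (D : ℚ) * k := by
        rw [hA, hD]; rw [hk]; ring
      have hjz : (j : ℤ) = (A : ℤ) + (D : ℤ) * k := by exact_mod_cast hjq
      have hjlt : (j : ℤ) < (D : ℤ) * m := by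
        have := hNQ ▸ hj; exact_mod_cast this
      have hk0 : 0 ≤ k := by nlinarith [Int.natCast_nonneg j, hjz]
      have hkm : k < m := by nlinarith
      refine ⟨k.toNat, by omega, ?_⟩
      have hjz' : (j : ℤ) = (A : ℤ) + (D : ℤ) * (k.toNat : ℤ) := by
        rw [Int.toNat_of_nonneg hk0]; exact hjz
      exact_mod_cast hjz'.symm
    · rintro ⟨b, hb, rfl⟩
      constructor
      · rw [hNQ]; nlinarith
      · refine ⟨(b : ℤ), ?_⟩
        rw [div_eq_iff hQ0.ne']
        push_cast
        rw [hA, hD]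
        ring
  have hinj : ∀ x ∈ Finset.range m, ∀ y ∈ Finset.range m,
      A + D * x = A + D * y → x = y := by
    intro x _ y _ h
    exact Nat.eq_of_mul_eq_mul_left hD0 (by omega : D * x = D * y)
  have harg : ∀ b : ℕ, ((A + D * b : ℕ) : ℚ) / ((Q : ℕ) : ℚ) = a + d * b := by
    intro b
    rw [div_eq_iff hQ0.ne']
    push_cast
    rw [hA, hD]
    ring
  have step1 : F N Q (ind a d)
      = ∏ b ∈ Finset.range m, baseU (a + d * (b : ℚ)) ((N : ℕ) : ℚ) (natQ_ne N) := by
    rw [F, Finset.prod_congr rfl hsplit, ← Finset.prod_filter, hfilt,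
      Finset.prod_image hinj]
    exact Finset.prod_congr rfl fun b _ => by rw [harg b]
  rw [step1]
  refine Units.ext ?_
  have hcoe := map_prod (Units.coeHom (Dom → ℂ))
    (fun b : ℕ => baseU (a + d * (b : ℚ)) ((N : ℕ) : ℚ) (natQ_ne N)) (Finset.range m)
  simp only [Units.coeHom_apply] at hcoe
  rw [hcoe]
  funext z
  rw [Finset.prod_apply]
  have hdC : ((d : ℚ) : ℂ) ≠ 0 := by exact_mod_cast hd0.ne'
  have hNC : ((((N : ℕ) : ℚ)) : ℂ) = (d : ℂ) * (m : ℂ) := by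
    rw [hNm]; push_cast; ring
  calc ∏ b ∈ Finset.range m,
        (baseU (a + d * (b : ℚ)) ((N : ℕ) : ℚ) (natQ_ne N) : Dom → ℂ) z
      = ∏ b ∈ Finset.range m,
          (1 - e ((z.1 - (a : ℂ) - (d : ℂ) * (b : ℂ)) / ((d : ℂ) * (m : ℂ)))) := by
        refine Finset.prod_congr rfl fun b _ => ?_
        show (1 : ℂ) - e ((z.1 - (((a + d * b : ℚ)) : ℂ)) / ((((N : ℕ) : ℚ)) : ℂ)) = _
        rw [hNC]
        push_cast
        ring_nf
    _ = 1 - e ((z.1 - (a : ℂ)) / (d : ℂ)) := prod_refine z.1 (a : ℂ) (d : ℂ) hdC m hm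

def Good (f : ℚ → ℤ) (u : (Dom → ℂ)ˣ) : Prop :=
  ∃ N₀ Q₀ : ℕ+, ∀ N Q : ℕ+, N₀ ∣ N → Q₀ ∣ Q → F N Q f = u

lemma Good.unique {f : ℚ → ℤ} {u v : (Dom → ℂ)ˣ} (hu : Good f u) (hv : Good f v) :
    u = v := by
  obtain ⟨N₀, Q₀, h⟩ := hu
  obtain ⟨N₁, Q₁, h'⟩ := hv
  rw [← h (N₀ * N₁) (Q₀ * Q₁) (dvd_mul_right _ _) (dvd_mul_right _ _),
    h' _ _ (dvd_mul_left _ _) (dvd_mul_left _ _)]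

lemma Good.add {f g : ℚ → ℤ} {u v : (Dom → ℂ)ˣ} (hu : Good f u) (hv : Good g v) :
    Good (f + g) (u * v) := by
  obtain ⟨N₀, Q₀, h⟩ := hu
  obtain ⟨N₁, Q₁, h'⟩ := hv
  exact ⟨N₀ * N₁, Q₀ * Q₁, fun N Q hN hQ => by
    rw [F_add, h N Q ((dvd_mul_right _ _).trans hN) ((dvd_mul_right _ _).trans hQ),
      h' N Q ((dvd_mul_left _ _).trans hN) ((dvd_mul_left _ _).trans hQ)]⟩

lemma Good.neg {f : ℚ → ℤ} {u : (Dom → ℂ)ˣ} (hu : Good f u) : Good (-f) u⁻¹ := by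
  obtain ⟨N₀, Q₀, h⟩ := hu
  exact ⟨N₀, Q₀, fun N Q hN hQ => by rw [F_neg, h N Q hN hQ]⟩

lemma good_zero : Good 0 1 := ⟨1, 1, fun N Q _ _ => F_zero N Q⟩

lemma good_ind (a d : ℚ) (ha : 0 ≤ a) (had : a < d) :
    Good (ind a d) (baseU a d (ha.trans_lt had).ne') := by
  have hd0 : 0 < d := ha.trans_lt had
  have hnum : 0 < d.num := Rat.num_pos.mpr hd0
  have hanum : 0 ≤ a.num := Rat.num_nonneg.mpr ha
  refine ⟨⟨d.num.toNat, by omega⟩, ⟨a.den * d.den, by positivity⟩, fun N Q hN hQ => ?_⟩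
  obtain ⟨t, ht⟩ := hN
  obtain ⟨s, hs⟩ := hQ
  have hN' : (N : ℕ) = d.num.toNat * (t : ℕ) := by rw [ht]; rfl
  have hs' : (Q : ℕ) = a.den * d.den * (s : ℕ) := by rw [hs]; rfl
  have hdn : ((d.num.toNat : ℕ) : ℚ) = (d.num : ℚ) := by
    exact_mod_cast congrArg (fun x : ℤ => (x : ℚ)) (Int.toNat_of_nonneg hnum.le)
  have han : ((a.num.toNat : ℕ) : ℚ) = (a.num : ℚ) := by
    exact_mod_cast congrArg (fun x : ℤ => (x : ℚ)) (Int.toNat_of_nonneg hanum)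
  refine F_ind a d ha had N Q ((t : ℕ) * d.den) ?_ ?_
    (a.num.toNat * (d.den * (s : ℕ))) ?_ (d.num.toNat * (a.den * (s : ℕ))) ?_
  · exact Nat.one_le_iff_ne_zero.mpr (Nat.mul_pos t.pos d.pos).ne'
  · calc ((N : ℕ) : ℚ) = (d.num : ℚ) * (t : ℕ) := by
          rw [hN']; push_cast [hdn]; ring
      _ = (d * d.den) * (t : ℕ) := by rw [Rat.mul_den_eq_num]
      _ = d * (((t : ℕ) * d.den : ℕ) : ℚ) := by push_cast; ring
  · calc ((a.num.toNat * (d.den * (s : ℕ)) : ℕ) : ℚ)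
        = (a.num : ℚ) * (d.den * (s : ℕ)) := by
          push_cast [han]; ring
      _ = (a * a.den) * (d.den * (s : ℕ)) := by rw [Rat.mul_den_eq_num]
      _ = ((Q : ℕ) : ℚ) * a := by rw [hs']; push_cast; ring
  · calc ((d.num.toNat * (a.den * (s : ℕ)) : ℕ) : ℚ)
        = (d.num : ℚ) * (a.den * (s : ℕ)) := by
          push_cast [hdn]; ring
      _ = (d * d.den) * (a.den * (s : ℕ)) := by rw [Rat.mul_den_eq_num]
      _ = ((Q : ℕ) : ℚ) * d := by rw [hs']; push_cast; ring

lemma allGood : ∀ f ∈ SQ, ∃ u, Good f u := by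
  intro f hf
  refine AddSubgroup.closure_induction ?_ ?_ ?_ ?_ hf
  · rintro g ⟨a, d, ha, had, rfl⟩
    exact ⟨_, good_ind a d ha had⟩
  · exact ⟨1, good_zero⟩
  · rintro g h _ _ ⟨u, hu⟩ ⟨v, hv⟩
    exact ⟨u * v, hu.add hv⟩
  · rintro g _ ⟨u, hu⟩
    exact ⟨u⁻¹, hu.neg⟩

noncomputable def etaU (f : SQ) : (Dom → ℂ)ˣ := Classical.choose (allGood f.1 f.2)

lemma etaU_good (f : SQ) : Good f.1 (etaU f) := Classical.choose_spec (allGood f.1 f.2)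

noncomputable def eta : SQ →+ Additive (Dom → ℂ)ˣ :=
  AddMonoidHom.mk' (fun f => Additive.ofMul (etaU f)) (by
    intro f g
    have h1 : Good ((f + g : SQ) : ℚ → ℤ) (etaU f * etaU g) :=
      (etaU_good f).add (etaU_good g)
    have h2 := (etaU_good (f + g)).unique h1
    show Additive.ofMul (etaU (f + g)) = Additive.ofMul (etaU f * etaU g)
    rw [h2])


theorem kubota_leopoldt_well_defined :
    (∃ η : SQ →+ Additive (Dom → ℂ)ˣ,
      ∀ (a d : ℚ), 0 ≤ a → a < d → ∀ hmem : ind a d ∈ SQ, ∀ z : Dom,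
        ((Additive.toMul (η ⟨ind a d, hmem⟩) : (Dom → ℂ)ˣ) : Dom → ℂ) z
          = 1 - e ((z.1 - (a : ℂ)) / (d : ℂ))) ∧
    (∀ (a d : ℚ) (m : ℕ), 0 ≤ a → a < d → 1 ≤ m → ∀ z : ℂ,
      ∏ b ∈ Finset.range m,
          (1 - e ((z - (a : ℂ) - (d : ℂ) * (b : ℂ)) / ((d : ℂ) * (m : ℂ))))
        = 1 - e ((z - (a : ℂ)) / (d : ℂ))) := by
  constructor
  · refine ⟨eta, fun a d ha had hmem z => ?_⟩
    have h : etaU ⟨ind a d, hmem⟩ = baseU a d (ha.trans_lt had).ne' :=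
      (etaU_good ⟨ind a d, hmem⟩).unique (good_ind a d ha had)
    have h2 : (Additive.toMul (eta ⟨ind a d, hmem⟩) : (Dom → ℂ)ˣ)
        = baseU a d (ha.trans_lt had).ne' := h
    rw [h2]
    rfl
  · intro a d m ha had hm z
    have hdC : ((d : ℚ) : ℂ) ≠ 0 := by exact_mod_cast (ha.trans_lt had).ne'
    exact prod_refine z (a : ℂ) (d : ℂ) hdC m hm
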